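/- arXiv:1802.02000 — 2 statements merged into one kernel-verified Lean document; each statement's English description precedes it below -/
import Mathlib

section
/- Every subgroup of PGL(2,ℤ) of order 4 is conjugate in PGL(2,ℤ) to the subgroup G₄ generated by [S] and [N]; that is, for every subgroup H of PGL(2,ℤ) with exactly 4 elements there exists g ∈ PGL(2,ℤ) such that g H g⁻¹ = G₄. -/
open Matrix

abbrev GL2Z := GL (Fin 2) ℤ

/-- PGL(2,ℤ): the quotient of GL(2,ℤ) by its center {I, -I}. -/
abbrev PGL2Z := GL2Z ⧸ Subgroup.center GL2Z

/-- The image of a matrix in PGL(2,ℤ). -/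
def cls (M : GL2Z) : PGL2Z := QuotientGroup.mk M

def Smat : GL2Z := ⟨!![0,1;1,0], !![0,1;1,0], by decide, by decide⟩
def Nmat : GL2Z := ⟨!![-1,0;0,1], !![-1,0;0,1], by decide, by decide⟩
def Tmat : GL2Z := ⟨!![0,-1;1,0], !![0,1;-1,0], by decide, by decide⟩
def Umat : GL2Z := ⟨!![0,-1;1,1], !![1,1;-1,0], by decide, by decide⟩

def Pmat : GL2Z := ⟨!![1,1;0,1], !![1,-1;0,1], by decide, by decide⟩
def Qmat : GL2Z := ⟨!![1,0;1,1], !![1,0;-1,1], by decide, by decide⟩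

lemma fin2_ext {α : Type*} {a b c d e f g h : α} :
    (!![a,b;c,d] : Matrix (Fin 2) (Fin 2) α) = !![e,f;g,h] ↔ a=e ∧ b=f ∧ c=g ∧ d=h := by
  constructor
  · intro H
    exact ⟨by simpa using congrFun (congrFun H 0) 0, by simpa using congrFun (congrFun H 0) 1,
      by simpa using congrFun (congrFun H 1) 0, by simpa using congrFun (congrFun H 1) 1⟩
  · rintro ⟨rfl,rfl,rfl,rfl⟩; rfl
lemma det_unit (M : GL2Z) : M.val.det = 1 ∨ M.val.det = -1 := by
  have h : M.val * M⁻¹.val = 1 := by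
    rw [← Units.val_mul, mul_inv_cancel, Units.val_one]
  have := congrArg Matrix.det h
  rw [Matrix.det_mul, Matrix.det_one] at this
  exact Int.isUnit_iff.mp (IsUnit.of_mul_eq_one _ this)

lemma mem_center_iff' (M : GL2Z) : M ∈ Subgroup.center GL2Z ↔ M = 1 ∨ M = -1 := by
  constructor
  · intro h
    rw [Subgroup.mem_center_iff] at h
    have h1 := congrArg Units.val (h Pmat)
    have h2 := congrArg Units.val (h Qmat)
    have e : M.val = !![M.val 0 0, M.val 0 1; M.val 1 0, M.val 1 1] := Matrix.eta_fin_two _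
    have hdet := det_unit M
    rw [Matrix.det_fin_two] at hdet
    set a := M.val 0 0; set b := M.val 0 1; set c := M.val 1 0; set d := M.val 1 1
    simp only [Units.val_mul, Pmat, Qmat] at h1 h2
    rw [e] at h1 h2
    rw [Matrix.mul_fin_two, Matrix.mul_fin_two, fin2_ext] at h1 h2
    obtain ⟨e11, e12, e21, e22⟩ := h1
    obtain ⟨f11, f12, f21, f22⟩ := h2
    have hb : b = 0 := by linarith
    have hc : c = 0 := by linarith
    have hda : d = a := by linarith
    rw [hb, hc, hda] at hdet e
    have ha : a = 1 ∨ a = -1 := by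
      rcases hdet with h | h
      · exact Int.isUnit_iff.mp (IsUnit.of_mul_eq_one (a := a) a (by linarith))
      · nlinarith
    rcases ha with h | h
    · left; ext : 1; rw [e, h, Units.val_one, Matrix.one_fin_two]
    · right; ext : 1; rw [e, h, Units.val_neg, Units.val_one]; rw [Matrix.one_fin_two]; exact (fin2_ext.mpr ⟨rfl,rfl,rfl,rfl⟩).trans (by ext i j; fin_cases i <;> fin_cases j <;> simp)
  · rintro (rfl | rfl) <;> rw [Subgroup.mem_center_iff] <;> intro g <;> ext : 1 <;>
      simp [Units.val_mul]


def trn (n : ℤ) : GL2Z :=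
  ⟨!![1,n;0,1], !![1,-n;0,1],
   by rw [Matrix.mul_fin_two, Matrix.one_fin_two, fin2_ext]; refine ⟨by ring, by ring, by ring, by ring⟩,
   by rw [Matrix.mul_fin_two, Matrix.one_fin_two, fin2_ext]; refine ⟨by ring, by ring, by ring, by ring⟩⟩

lemma inv_val (X : GL2Z) : (X⁻¹).val = X.inv := rfl

lemma conj_val (P M : GL2Z) : (P * M * P⁻¹).val = P.val * M.val * P.inv := by
  rw [Units.val_mul, Units.val_mul, inv_val]

lemma red : ∀ n : ℕ, ∀ M : GL2Z, ∀ a b c : ℤ, M.val = !![a,b;c,-a] → 0 < c →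
    c.natAbs = n → a*a + b*c = -1 →
    ∃ P : GL2Z, P * M * P⁻¹ = Tmat ∨ P * M * P⁻¹ = -Tmat := by
  intro n
  induction n using Nat.strong_induction_on with
  | _ n IH =>
    intro M a b c hM hc hn h
    set q : ℤ := (2*a + c) / (2*c) with hq
    set r : ℤ := (2*a + c) % (2*c) with hr
    have hr0 : 0 ≤ r := Int.emod_nonneg _ (by positivity)
    have hr1 : r < 2*c := Int.emod_lt_of_pos _ (by positivity)
    have heq : 2*c * q + r = 2*a + c := Int.mul_ediv_add_emod _ _
    set a' : ℤ := a - q*c with ha'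
    set b' : ℤ := b + 2*q*a - q*q*c with hb'
    have h2a : 2*a' = r - c := by rw [ha']; linarith
    have h' : a'*a' + b'*c = -1 := by rw [ha', hb']; linear_combination h
    have hM₁ : ((trn (-q)) * M * (trn (-q))⁻¹).val = !![a', b'; c, -a'] := by
      rw [conj_val, hM]
      show !![1,-q;0,1] * _ * !![1,-(-q);0,1] = _
      rw [Matrix.mul_fin_two, Matrix.mul_fin_two, fin2_ext]
      refine ⟨by ring, by ring, by ring, by ring⟩
    have hb'neg : b' < 0 := by nlinarith
    by_cases hlt : b'.natAbs < n
    · -- recurse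
      have hM₂ : (Tmat * ((trn (-q)) * M * (trn (-q))⁻¹) * Tmat⁻¹).val
          = !![-a', -c; -b', -(-a')] := by
        rw [conj_val, hM₁]
        show !![0,-1;1,0] * _ * !![0,1;-1,0] = _
        rw [Matrix.mul_fin_two, Matrix.mul_fin_two, fin2_ext]
        refine ⟨by ring, by ring, by ring, by ring⟩
      have h2 : (-a')*(-a') + (-c)*(-b') = -1 := by linear_combination h'
      obtain ⟨P₁, hP₁⟩ := IH b'.natAbs hlt (Tmat * ((trn (-q)) * M * (trn (-q))⁻¹) * Tmat⁻¹)
        (-a') (-c) (-b') hM₂ (by omega) (by simp) h2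
      refine ⟨P₁ * Tmat * trn (-q), ?_⟩
      have : P₁ * Tmat * trn (-q) * M * (P₁ * Tmat * trn (-q))⁻¹
          = P₁ * (Tmat * ((trn (-q)) * M * (trn (-q))⁻¹) * Tmat⁻¹) * P₁⁻¹ := by
        simp [_root_.mul_inv_rev, mul_assoc]
      rw [this]; exact hP₁
    · -- base case
      push_neg at hlt
      have hcb : c ≤ -b' := by
        have h1 : c.natAbs ≤ b'.natAbs := hn ▸ hlt
        omega
      have k1 : c*c ≤ 1 + a'*a' := by nlinarith
      have k2 : 4*(a'*a') ≤ c*c := by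
        nlinarith [mul_nonneg (by linarith : (0:ℤ) ≤ c - 2*a') (by linarith : (0:ℤ) ≤ c + 2*a')]
      have hc1 : c = 1 := by nlinarith
      have ha0 : a' = 0 := by
        have h3 : a'*a' = 0 := le_antisymm (by nlinarith) (mul_self_nonneg a')
        exact mul_self_eq_zero.mp h3
      have hb1 : b' = -1 := by
        rw [hc1, ha0] at h'; linarith
      refine ⟨trn (-q), Or.inl ?_⟩
      ext : 1
      rw [hM₁, hc1, ha0, hb1]; rfl


lemma neg_one_fin2 : (-1 : Matrix (Fin 2) (Fin 2) ℤ) = !![-1,0;0,-1] := by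
  ext i j; fin_cases i <;> fin_cases j <;> simp [Matrix.one_apply]

lemma conj_fix (P M : GL2Z) (h : P * M * P⁻¹ = -Tmat) :
    (Nmat * P) * M * (Nmat * P)⁻¹ = Tmat := by
  have e : (Nmat * P) * M * (Nmat * P)⁻¹ = Nmat * (P * M * P⁻¹) * Nmat⁻¹ := by
    simp [_root_.mul_inv_rev, mul_assoc]
  rw [e, h]
  ext : 1
  rw [conj_val, Units.val_neg]
  show !![-1,0;0,1] * -(!![0,-1;1,0]) * !![-1,0;0,1] = !![0,-1;1,0]
  decide

lemma sq_neg_one_conj (M : GL2Z) (h : M.val * M.val = -1) :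
    ∃ P : GL2Z, P * M * P⁻¹ = Tmat := by
  have e : M.val = !![M.val 0 0, M.val 0 1; M.val 1 0, M.val 1 1] := Matrix.eta_fin_two _
  set a := M.val 0 0; set b := M.val 0 1; set c := M.val 1 0; set d := M.val 1 1
  rw [e, neg_one_fin2, Matrix.mul_fin_two, fin2_ext] at h
  obtain ⟨q11, q12, q21, q22⟩ := h
  have hd : d = -a := by
    by_cases had : a + d = 0
    · linarith
    · exfalso
      have hb : b = 0 := by
        rcases mul_eq_zero.mp (show b * (a+d) = 0 by linarith) with h | h
        · exact h
        · exact absurd h had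
      have hc : c = 0 := by
        rcases mul_eq_zero.mp (show c * (a+d) = 0 by linarith) with h | h
        · exact h
        · exact absurd h had
      rw [hb, hc] at q11
      nlinarith
  rw [hd] at e
  have hc0 : c ≠ 0 := by
    intro h0; rw [h0] at q11; nlinarith
  have main : ∃ P : GL2Z, P * M * P⁻¹ = Tmat ∨ P * M * P⁻¹ = -Tmat := by
    rcases lt_or_gt_of_ne hc0 with hneg | hpos
    · -- conjugate by Nmat first
      have hM₁ : (Nmat * M * Nmat⁻¹).val = !![a, -b; -c, -a] := by
        rw [conj_val, e]
        show !![-1,0;0,1] * _ * !![-1,0;0,1] = _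
        rw [Matrix.mul_fin_two, Matrix.mul_fin_two, fin2_ext]
        refine ⟨by ring, by ring, by ring, by ring⟩
      obtain ⟨P, hP⟩ := red (-c).natAbs (Nmat * M * Nmat⁻¹) a (-b) (-c) hM₁
        (by omega) rfl (by linear_combination q11)
      refine ⟨P * Nmat, ?_⟩
      have eq2 : P * Nmat * M * (P * Nmat)⁻¹ = P * (Nmat * M * Nmat⁻¹) * P⁻¹ := by
        simp [_root_.mul_inv_rev, mul_assoc]
      rw [eq2]; exact hP
    · obtain ⟨P, hP⟩ := red c.natAbs M a b c e hpos rfl (by linarith)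
      exact ⟨P, hP⟩
  obtain ⟨P, hP | hP⟩ := main
  · exact ⟨P, hP⟩
  · exact ⟨Nmat * P, conj_fix P M hP⟩

lemma mk_eq_mk {A B : GL2Z} : cls A = cls B ↔ A = B ∨ A = -B := by
  rw [cls, cls, QuotientGroup.eq, mem_center_iff']
  constructor
  · rintro (h | h)
    · left; exact eq_of_inv_mul_eq_one h
    · right
      have h2 : -A = B := by
        have := congrArg (fun z => A * z) h
        simpa [mul_assoc] using this.symm
      exact neg_eq_iff_eq_neg.mp h2
  · rintro (rfl | rfl)
    · left; simp
    · right
      simp [mul_neg]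
  
lemma mk_neg (A : GL2Z) : cls (-A) = cls A := by
  rw [mk_eq_mk]; right; simp

lemma commT (M : GL2Z) (h : Tmat.val * M.val = M.val * Tmat.val) :
    M = 1 ∨ M = -1 ∨ M = Tmat ∨ M = -Tmat := by
  have e : M.val = !![M.val 0 0, M.val 0 1; M.val 1 0, M.val 1 1] := Matrix.eta_fin_two _
  have hdet := det_unit M
  rw [Matrix.det_fin_two] at hdet
  set a := M.val 0 0; set b := M.val 0 1; set c := M.val 1 0; set d := M.val 1 1
  rw [e] at h
  rw [show Tmat.val = !![0,-1;1,0] from rfl, Matrix.mul_fin_two, Matrix.mul_fin_two, fin2_ext] at h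
  obtain ⟨h11, h12, h21, h22⟩ := h
  have hcb : c = -b := by linarith
  have hda : d = a := by linarith
  rw [hcb, hda] at e hdet
  have hsq : a*a + b*b = 1 := by
    rcases hdet with h | h
    · nlinarith
    · nlinarith
  have ha1 : -1 ≤ a := by nlinarith
  have ha2 : a ≤ 1 := by nlinarith
  have hb1 : -1 ≤ b := by nlinarith
  have hb2 : b ≤ 1 := by nlinarith
  interval_cases a <;> interval_cases b <;>
    first
      | (exfalso; omega)
      | (left; ext : 1; rw [e]; decide)
      | (right; left; ext : 1; rw [e]; decide)
      | (right; right; left; ext : 1; rw [e]; decide)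
      | (right; right; right; ext : 1; rw [e]; decide)

lemma fin2_neg {a b c d : ℤ} : -(!![a,b;c,d]) = !![-a,-b;-c,-d] := by
  ext i j; fin_cases i <;> fin_cases j <;> simp

lemma anticommT (M : GL2Z) (h : Tmat.val * M.val = -(M.val * Tmat.val)) :
    M = Smat ∨ M = -Smat ∨ M = Nmat ∨ M = -Nmat := by
  have e : M.val = !![M.val 0 0, M.val 0 1; M.val 1 0, M.val 1 1] := Matrix.eta_fin_two _
  have hdet := det_unit M
  rw [Matrix.det_fin_two] at hdet
  set a := M.val 0 0; set b := M.val 0 1; set c := M.val 1 0; set d := M.val 1 1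
  rw [e] at h
  rw [show Tmat.val = !![0,-1;1,0] from rfl, Matrix.mul_fin_two, Matrix.mul_fin_two,
    fin2_neg, fin2_ext] at h
  obtain ⟨h11, h12, h21, h22⟩ := h
  have hcb : c = b := by linarith
  have hda : d = -a := by linarith
  rw [hcb, hda] at e hdet
  have hsq : a*a + b*b = 1 := by
    rcases hdet with h | h
    · nlinarith
    · nlinarith
  have ha1 : -1 ≤ a := by nlinarith
  have ha2 : a ≤ 1 := by nlinarith
  have hb1 : -1 ≤ b := by nlinarith
  have hb2 : b ≤ 1 := by nlinarith
  interval_cases a <;> interval_cases b <;>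
    first
      | (exfalso; omega)
      | (left; ext : 1; rw [e]; decide)
      | (right; left; ext : 1; rw [e]; decide)
      | (right; right; left; ext : 1; rw [e]; decide)
      | (right; right; right; ext : 1; rw [e]; decide)

lemma TS_anti : Tmat * Smat = -(Smat * Tmat) := by
  ext : 1; rw [Units.val_neg, Units.val_mul, Units.val_mul]; decide

lemma TN_anti : Tmat * Nmat = -(Nmat * Tmat) := by
  ext : 1; rw [Units.val_neg, Units.val_mul, Units.val_mul]; decide

lemma T_eq_SN : Tmat = -(Smat * Nmat) := by
  ext : 1; rw [Units.val_neg, Units.val_mul]; decide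

lemma cls_mul (A B : GL2Z) : cls A * cls B = cls (A * B) := rfl

lemma mem_CT (x : PGL2Z) : x ∈ Subgroup.centralizer {cls Tmat} ↔
    x = 1 ∨ x = cls Smat ∨ x = cls Nmat ∨ x = cls Tmat := by
  constructor
  · intro hx
    obtain ⟨M, rfl⟩ := QuotientGroup.mk_surjective x
    have hc := Subgroup.mem_centralizer_iff.mp hx (cls Tmat) rfl
    rw [show (QuotientGroup.mk M : PGL2Z) = cls M from rfl, cls_mul, cls_mul, mk_eq_mk] at hc
    rcases hc with hc | hc
    · have hval : Tmat.val * M.val = M.val * Tmat.val := by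
        rw [← Units.val_mul, ← Units.val_mul, hc]
      rcases commT M hval with rfl | rfl | rfl | rfl
      · left; rfl
      · left; exact mk_neg 1
      · right; right; right; rfl
      · right; right; right; exact mk_neg Tmat
    · have hval : Tmat.val * M.val = -(M.val * Tmat.val) := by
        rw [← Units.val_mul, ← Units.val_mul, hc, Units.val_neg]
      rcases anticommT M hval with rfl | rfl | rfl | rfl
      · right; left; rfl
      · right; left; exact mk_neg Smat
      · right; right; left; rfl
      · right; right; left; exact mk_neg Nmat
  · intro hx
    rw [Subgroup.mem_centralizer_iff]
    rintro g rfl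
    rcases hx with rfl | rfl | rfl | rfl
    · simp
    · rw [cls_mul, cls_mul, mk_eq_mk]; right; rw [TS_anti]
    · rw [cls_mul, cls_mul, mk_eq_mk]; right; rw [TN_anti]
    · rfl

lemma closure_eq_CT :
    Subgroup.closure {cls Smat, cls Nmat} = Subgroup.centralizer {cls Tmat} := by
  apply le_antisymm
  · rw [Subgroup.closure_le]
    rintro x (rfl | rfl)
    · exact (mem_CT _).mpr (Or.inr (Or.inl rfl))
    · exact (mem_CT _).mpr (Or.inr (Or.inr (Or.inl rfl)))
  · intro x hx
    rcases (mem_CT x).mp hx with rfl | rfl | rfl | rfl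
    · exact one_mem _
    · exact Subgroup.subset_closure (Or.inl rfl)
    · exact Subgroup.subset_closure (Or.inr rfl)
    · have : cls Tmat = cls Smat * cls Nmat := by
        rw [cls_mul, T_eq_SN, mk_neg]
      rw [this]
      exact mul_mem (Subgroup.subset_closure (Or.inl rfl))
        (Subgroup.subset_closure (Or.inr rfl))

lemma cls_ne (A B : GL2Z) (h1 : A.val ≠ B.val) (h2 : A.val ≠ -B.val) : cls A ≠ cls B := by
  intro h
  rcases mk_eq_mk.mp h with rfl | rfl
  · exact h1 rfl
  · exact h2 (Units.val_neg B)

lemma ne_1S : (1 : PGL2Z) ≠ cls Smat := cls_ne 1 Smat (by decide) (by decide)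
lemma ne_1N : (1 : PGL2Z) ≠ cls Nmat := cls_ne 1 Nmat (by decide) (by decide)
lemma ne_1T : (1 : PGL2Z) ≠ cls Tmat := cls_ne 1 Tmat (by decide) (by decide)
lemma ne_SN : cls Smat ≠ cls Nmat := cls_ne Smat Nmat (by decide) (by decide)
lemma ne_ST : cls Smat ≠ cls Tmat := cls_ne Smat Tmat (by decide) (by decide)
lemma ne_NT : cls Nmat ≠ cls Tmat := cls_ne Nmat Tmat (by decide) (by decide)

lemma CT_carrier : (Subgroup.centralizer {cls Tmat} : Set PGL2Z)
    = {1, cls Smat, cls Nmat, cls Tmat} := by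
  ext x
  rw [SetLike.mem_coe, mem_CT]
  simp [Set.mem_insert_iff]

lemma CT_card : Nat.card (Subgroup.centralizer {cls Tmat} : Subgroup PGL2Z) = 4 := by
  rw [← SetLike.coe_sort_coe, Nat.card_coe_set_eq, CT_carrier]
  rw [Set.ncard_insert_of_notMem (by simp [ne_1S, ne_1N, ne_1T]) (Set.toFinite _),
    Set.ncard_insert_of_notMem (by simp [ne_SN, ne_ST]) (Set.toFinite _),
    Set.ncard_pair ne_NT]

noncomputable def dhom : PGL2Z →* ℤˣ :=
  QuotientGroup.lift _ Matrix.GeneralLinearGroup.det (by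
    intro x hx
    rcases (mem_center_iff' x).mp hx with rfl | rfl
    · simp
    · apply Units.ext
      rw [Matrix.GeneralLinearGroup.val_det_apply]
      show ((-1 : GL2Z).val).det = ((1 : ℤˣ) : ℤ)
      rw [Units.val_neg, Units.val_one, Matrix.det_neg]
      simp)

lemma dhom_cls (M : GL2Z) : dhom (cls M) = Matrix.GeneralLinearGroup.det M := rfl

lemma sq_one (M : GL2Z) (hdet : M.val.det = 1) (h : M.val * M.val = 1) :
    M = 1 ∨ M = -1 := by
  have e : M.val = !![M.val 0 0, M.val 0 1; M.val 1 0, M.val 1 1] := Matrix.eta_fin_two _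
  rw [Matrix.det_fin_two] at hdet
  set a := M.val 0 0; set b := M.val 0 1; set c := M.val 1 0; set d := M.val 1 1
  rw [e, Matrix.one_fin_two, Matrix.mul_fin_two, fin2_ext] at h
  obtain ⟨q11, q12, q21, q22⟩ := h
  by_cases had : a + d = 0
  · exfalso
    have hd : d = -a := by linarith
    rw [hd] at hdet
    nlinarith
  · have hb : b = 0 := by
      rcases mul_eq_zero.mp (show b * (a+d) = 0 by linarith) with h | h
      · exact h
      · exact absurd h had
    have hc : c = 0 := by
      rcases mul_eq_zero.mp (show c * (a+d) = 0 by linarith) with h | h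
      · exact h
      · exact absurd h had
    rw [hb, hc] at q11 q22 hdet
    rcases Int.isUnit_iff.mp (IsUnit.of_mul_eq_one (a := a) a (by linarith)) with ha | ha
    · have hd : d = 1 := by
        rw [ha] at hdet; linarith
      rw [ha, hd, hb, hc] at e
      left; ext : 1; rw [e]; decide
    · have hd : d = -1 := by
        rw [ha] at hdet; linarith
      rw [ha, hd, hb, hc] at e
      right; ext : 1; rw [e]; decide

lemma exists_invol (H : Subgroup PGL2Z) (hH : Nat.card H = 4) :
    ∃ a : H, (a : PGL2Z) ≠ 1 ∧ a * a = 1 ∧ dhom (a : PGL2Z) = 1 := by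
  have hfin : Finite H := Nat.finite_of_card_ne_zero (by omega)
  have hnt : Nontrivial H := Finite.one_lt_card_iff_nontrivial.mp (by omega)
  obtain ⟨x, hx⟩ := exists_ne (1 : H)
  have key : ∃ y : H, y ≠ 1 ∧ dhom (y : PGL2Z) = 1 := by
    rcases Int.units_eq_one_or (dhom (x : PGL2Z)) with h1 | h1
    · exact ⟨x, hx, h1⟩
    · have hex : ∃ x' : H, x' ∉ ({1, x, x⁻¹} : Set H) := by
        by_contra hcon
        push_neg at hcon
        have huniv : (Set.univ : Set H) ⊆ {1, x, x⁻¹} := fun z _ => hcon z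
        have h4 : (Set.univ : Set H).ncard = 4 := by rw [Set.ncard_univ, hH]
        have hle := Set.ncard_le_ncard huniv (Set.toFinite _)
        have hle3 : ({1, x, x⁻¹} : Set H).ncard ≤ 3 := by
          calc ({1, x, x⁻¹} : Set H).ncard ≤ ({x, x⁻¹} : Set H).ncard + 1 :=
                Set.ncard_insert_le _ _
            _ ≤ (({x⁻¹} : Set H).ncard + 1) + 1 := by
                have := Set.ncard_insert_le x ({x⁻¹} : Set H); omega
            _ ≤ 3 := by rw [Set.ncard_singleton]
        omega
      obtain ⟨x', hx'⟩ := hex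
      simp only [Set.mem_insert_iff, Set.mem_singleton_iff, not_or] at hx'
      obtain ⟨hx'1, hx'x, hx'xi⟩ := hx'
      rcases Int.units_eq_one_or (dhom (x' : PGL2Z)) with h2 | h2
      · exact ⟨x', hx'1, h2⟩
      · refine ⟨x * x', ?_, ?_⟩
        · intro hcon
          exact hx'xi (eq_inv_of_mul_eq_one_right hcon)
        · push_cast
          rw [_root_.map_mul, h1, h2]
          decide
  obtain ⟨y, hy1, hy2⟩ := key
  by_cases hsq : y * y = 1
  · exact ⟨y, by simpa using hy1, hsq, hy2⟩
  · refine ⟨y * y, ?_, ?_, ?_⟩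
    · intro hc
      exact hsq (Subtype.ext (by simpa using hc))
    · have h4 : y ^ 4 = 1 := by
        have := pow_card_eq_one' (G := H) (x := y)
        rwa [hH] at this
      rw [show (4:ℕ) = 2*2 from rfl, pow_mul, pow_two, pow_two] at h4
      exact h4
    · push_cast
      rw [_root_.map_mul, hy2]
      decide

/-- Every subgroup of PGL(2,ℤ) of order 4 is conjugate to G₄ = ⟨[S],[N]⟩. -/
theorem stmt_3 (H : Subgroup PGL2Z) (hH : Nat.card H = 4) :
    ∃ g : PGL2Z,
      Subgroup.map (MulAut.conj g).toMonoidHom H = Subgroup.closure {cls Smat, cls Nmat} := by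
  obtain ⟨a, ha1, ha2, ha3⟩ := exists_invol H hH
  have hcomm : ∀ u v : H, u * v = v * u :=
    IsPGroup.commutative_of_card_eq_prime_sq (p := 2) (by rw [hH]; norm_num)
  obtain ⟨M, hM⟩ := QuotientGroup.mk_surjective (a : PGL2Z)
  have hdet : M.val.det = 1 := by
    have h1 : Matrix.GeneralLinearGroup.det M = 1 := by
      rw [← dhom_cls M, show cls M = (a : PGL2Z) from hM, ha3]
    have := congrArg Units.val h1
    rwa [Matrix.GeneralLinearGroup.val_det_apply, Units.val_one] at this
  have hsqc : M * M ∈ Subgroup.center GL2Z := by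
    rw [← QuotientGroup.eq_one_iff]
    show cls (M * M) = 1
    have hM' : cls M = (a : PGL2Z) := hM
    rw [← cls_mul, hM']
    rw [show ((a : PGL2Z) * (a : PGL2Z)) = ((a * a : H) : PGL2Z) by push_cast; ring_nf, ha2]
    rfl
  rcases (mem_center_iff' _).mp hsqc with hsq | hsq
  · exfalso
    have hmat : M.val * M.val = 1 := by
      have := congrArg Units.val hsq
      rwa [Units.val_mul, Units.val_one] at this
    rcases sq_one M hdet hmat with rfl | rfl
    · exact ha1 (by rw [← hM]; rfl)
    · exact ha1 (by rw [← hM]; exact mk_neg 1)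
  · have hmat : M.val * M.val = -1 := by
      have := congrArg Units.val hsq
      rwa [Units.val_mul, Units.val_neg, Units.val_one] at this
    obtain ⟨P, hP⟩ := sq_neg_one_conj M hmat
    refine ⟨cls P, ?_⟩
    rw [closure_eq_CT]
    set f := (MulAut.conj (cls P)).toMonoidHom with hf
    have hfapp : ∀ x : PGL2Z, f x = cls P * x * (cls P)⁻¹ := fun x => rfl
    have hconj_a : f (a : PGL2Z) = cls Tmat := by
      rw [hfapp, ← hM]
      show cls P * cls M * (cls P⁻¹) = cls Tmat
      rw [cls_mul, cls_mul, hP]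
    have hle : Subgroup.map f H ≤ Subgroup.centralizer {cls Tmat} := by
      rintro y ⟨h, hh, rfl⟩
      rw [Subgroup.mem_centralizer_iff]
      rintro g rfl
      rw [← hconj_a, ← _root_.map_mul, ← _root_.map_mul]
      congr 1
      have := congrArg (fun z : H => (z : PGL2Z)) (hcomm a ⟨h, hh⟩)
      simpa using this
    have hinj : Function.Injective f := (MulAut.conj (cls P)).injective
    have hcard : Nat.card (Subgroup.map f H) = 4 := by
      rw [← hH]
      exact (Nat.card_congr (Subgroup.equivMapOfInjective H _ hinj).toEquiv).symm
    have hset : ((Subgroup.map f H : Set PGL2Z))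
        = (Subgroup.centralizer {cls Tmat} : Set PGL2Z) := by
      refine Set.eq_of_subset_of_ncard_le (SetLike.coe_subset_coe.mpr hle) ?_ ?_
      · rw [← Nat.card_coe_set_eq, ← Nat.card_coe_set_eq,
          SetLike.coe_sort_coe, SetLike.coe_sort_coe, hcard, CT_card]
      · rw [CT_carrier]; exact Set.toFinite _
    exact SetLike.ext' hset
end

section
/- Every element of order 2 in PGL(2,ℤ) is conjugate in PGL(2,ℤ) to [S], to [N], or to [T]. -/
open Matrix

-- auxiliary development

abbrev M2Z := Matrix (Fin 2) (Fin 2) ℤ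

def matOf (a b c : ℤ) : M2Z := !![a,b;c,-a]

def MRel (A K : M2Z) : Prop := ∃ P : GL2Z, (P : M2Z) * A = K * (P : M2Z)

lemma mrel_refl (A : M2Z) : MRel A A := ⟨1, by simp⟩

lemma mrel_step {A B K : M2Z} (P : GL2Z) (h : (P : M2Z) * A = B * (P : M2Z))
    (h2 : MRel B K) : MRel A K := by
  obtain ⟨Q, hQ⟩ := h2
  refine ⟨Q * P, ?_⟩
  push_cast [Units.val_mul]
  rw [mul_assoc, h, ← mul_assoc, hQ, mul_assoc]

lemma mrel_neg {A K : M2Z} (h : MRel (-A) (-K)) : MRel A K := by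
  obtain ⟨P, hP⟩ := h
  exact ⟨P, by rw [mul_neg, neg_mul] at hP; exact neg_inj.mp hP⟩

def shearU (t : ℤ) : GL2Z :=
  ⟨!![1,t;0,1], !![1,-t;0,1],
   by simp [Matrix.mul_fin_two, Matrix.one_fin_two],
   by simp [Matrix.mul_fin_two, Matrix.one_fin_two]⟩

lemma step_shear {K : M2Z} (a b c t : ℤ)
    (h : MRel (matOf (a + t*c) (b - 2*t*a - t*t*c) c) K) : MRel (matOf a b c) K := by
  refine mrel_step (shearU t) ?_ h
  show !![(1:ℤ),t;0,1] * _ = _ * !![(1:ℤ),t;0,1]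
  simp only [matOf, Matrix.mul_fin_two]
  all_goals ring_nf

lemma step_swap {K : M2Z} (a b c : ℤ)
    (h : MRel (matOf (-a) (-c) (-b)) K) : MRel (matOf a b c) K := by
  refine mrel_step Tmat ?_ h
  show !![(0:ℤ),-1;1,0] * _ = _ * !![(0:ℤ),-1;1,0]
  simp only [matOf, Matrix.mul_fin_two]
  all_goals ring_nf

lemma neg_matOf (a b c : ℤ) : -(matOf a b c) = matOf (-a) (-b) (-c) := by
  unfold matOf
  ext i j
  fin_cases i <;> fin_cases j <;> simp

-- existence of reducing shear
lemma exists_t (a c : ℤ) (hc : c ≠ 0) : ∃ t : ℤ, 2 * |a + t * c| ≤ |c| := by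
  rcases le_or_gt (2 * (a % c)) |c| with h | h
  · refine ⟨-(a / c), ?_⟩
    have h1 : a + -(a / c) * c = a % c := by rw [Int.emod_def]; ring
    rw [h1, abs_of_nonneg (Int.emod_nonneg a hc)]
    exact h
  · refine ⟨-(a / c) - c.sign, ?_⟩
    have hsc : c.sign * c = |c| := by
      rcases lt_or_gt_of_ne hc with h | h
      · rw [Int.sign_eq_neg_one_of_neg h, abs_of_neg h]; ring
      · rw [Int.sign_eq_one_of_pos h, abs_of_pos h]; ring
    have h1 : a + (-(a / c) - c.sign) * c = a % c - |c| := by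
      rw [Int.emod_def, ← hsc]; ring
    rw [h1]
    have key : a % c = a % |c| := by
      rcases abs_choice c with h | h
      · rw [h]
      · rw [h, Int.emod_neg]
    have h2 : a % c < |c| := key ▸ Int.emod_lt_of_pos a (abs_pos.mpr hc)
    have h3 : (0:ℤ) ≤ a % c := Int.emod_nonneg a hc
    rw [abs_of_nonpos (by linarith)]
    linarith

-- base case for the SN classification: c = 0, a = 1
lemma baseSN (b : ℤ) :
    MRel (matOf 1 b 0) (matOf 0 1 1) ∨ MRel (matOf 1 b 0) (-(matOf 0 1 1)) ∨
    MRel (matOf 1 b 0) (matOf (-1) 0 0) ∨ MRel (matOf 1 b 0) (-(matOf (-1) 0 0)) := by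
  rcases Int.even_or_odd b with ⟨k, hk⟩ | ⟨k, hk⟩
  · right; right; right
    apply step_shear 1 b 0 k
    have e1 : (1:ℤ) + k * 0 = 1 := by ring
    have e2 : b - 2 * k * 1 - k * k * 0 = 0 := by rw [hk]; ring
    rw [e1, e2]
    have : -(matOf (-1) 0 0) = matOf 1 0 0 := by rw [neg_matOf]; norm_num
    rw [this]; exact mrel_refl _
  · left
    apply step_shear 1 b 0 k
    have e1 : (1:ℤ) + k * 0 = 1 := by ring
    have e2 : b - 2 * k * 1 - k * k * 0 = 1 := by rw [hk]; ring
    rw [e1, e2]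
    -- conjugate !![1,1;0,-1] to S = !![0,1;1,0] via Q = !![1,1;1,0]
    refine ⟨⟨!![1,1;1,0], !![0,1;1,-1], by decide, by decide⟩, ?_⟩
    show !![(1:ℤ),1;1,0] * _ = _ * !![(1:ℤ),1;1,0]
    simp [matOf, Matrix.mul_fin_two]

lemma redSN : ∀ n : ℕ, ∀ a b c : ℤ, c.natAbs = n → a * a + b * c = 1 →
    MRel (matOf a b c) (matOf 0 1 1) ∨ MRel (matOf a b c) (-(matOf 0 1 1)) ∨
    MRel (matOf a b c) (matOf (-1) 0 0) ∨ MRel (matOf a b c) (-(matOf (-1) 0 0)) := by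
  intro n
  induction n using Nat.strong_induction_on with
  | _ n IH =>
    intro a b c hn hinv
    rcases eq_or_ne c 0 with rfl | hc
    · -- c = 0 : a² = 1
      have ha : a = 1 ∨ a = -1 := mul_self_eq_one_iff.mp (by linarith)
      rcases ha with rfl | rfl
      · exact baseSN b
      · have h := baseSN (-b)
        have hneg : -(matOf (-1) b 0) = matOf 1 (-b) 0 := by rw [neg_matOf]; norm_num
        rcases h with h | h | h | h
        · right; left; apply mrel_neg; rw [hneg, neg_neg]; exact h
        · left; apply mrel_neg; rw [hneg]; exact h
        · right; right; right; apply mrel_neg; rw [hneg, neg_neg]; exact h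
        · right; right; left; apply mrel_neg; rw [hneg]; exact h
    · -- c ≠ 0 : shear to make |a| small
      obtain ⟨t, ht⟩ := exists_t a c hc
      have hstep : ∀ K : M2Z, MRel (matOf (a + t*c) (b - 2*t*a - t*t*c) c) K →
          MRel (matOf a b c) K := fun K h => step_shear a b c t h
      set a' := a + t * c with ha'
      set b' := b - 2 * t * a - t * t * c with hb'
      clear_value a' b'
      have hinv' : a' * a' + b' * c = 1 := by rw [ha', hb']; ring_nf; linarith [hinv]
      rcases lt_or_ge b'.natAbs c.natAbs with hlt | hge
      · -- swap and recurse
        have h := IH b'.natAbs (hn ▸ hlt) (-a') (-c) (-b') (by simp) (by ring_nf; linarith [hinv'])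
        rcases h with h | h | h | h
        · exact Or.inl (hstep _ (step_swap _ _ _ h))
        · exact Or.inr (Or.inl (hstep _ (step_swap _ _ _ h)))
        · exact Or.inr (Or.inr (Or.inl (hstep _ (step_swap _ _ _ h))))
        · exact Or.inr (Or.inr (Or.inr (hstep _ (step_swap _ _ _ h))))
      · -- terminal: a' = 0, b' * c = 1
        have habs : |c| ≤ |b'| := by
          rw [Int.abs_eq_natAbs, Int.abs_eq_natAbs]
          exact_mod_cast hge
        have hcpos : (1:ℤ) ≤ |c| := Int.one_le_abs (by exact_mod_cast hc)
        have ha0 : a' = 0 := by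
          by_contra h0
          have h1 : (1:ℤ) ≤ |a'| := Int.one_le_abs h0
          have h2 : |b' * c| = |b'| * |c| := abs_mul _ _
          have h4 : |a'| * |a'| = a' * a' := abs_mul_abs_self a'
          have k5 : (1:ℤ) ≤ a' * a' := by nlinarith
          have k3 : |b' * c| = a' * a' - 1 := by
            rw [(by linarith : b' * c = -(a' * a' - 1)), abs_neg,
              abs_of_nonneg (by linarith)]
          have k1 : |c| * |c| ≤ |b'| * |c| := mul_le_mul_of_nonneg_right habs (abs_nonneg c)
          have k2 : (2 * |a'|) * (2 * |a'|) ≤ |c| * |c| :=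
            mul_self_le_mul_self (by positivity) ht
          nlinarith
        rw [ha0] at hinv'
        simp at hinv'
        rcases Int.mul_eq_one_iff_eq_one_or_neg_one.mp hinv' with ⟨hb1, hc1⟩ | ⟨hb1, hc1⟩
        · left; apply hstep; rw [ha0, hb1, hc1]; exact mrel_refl _
        · right; left
          apply hstep; rw [ha0, hb1, hc1]
          have : -(matOf 0 1 1) = matOf 0 (-1) (-1) := by rw [neg_matOf]; norm_num
          rw [this]; exact mrel_refl _

lemma redT : ∀ n : ℕ, ∀ a b c : ℤ, c.natAbs = n → a * a + b * c = -1 →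
    MRel (matOf a b c) (matOf 0 (-1) 1) ∨ MRel (matOf a b c) (-(matOf 0 (-1) 1)) := by
  intro n
  induction n using Nat.strong_induction_on with
  | _ n IH =>
    intro a b c hn hinv
    rcases eq_or_ne c 0 with rfl | hc
    · exfalso; nlinarith [mul_self_nonneg a]
    · obtain ⟨t, ht⟩ := exists_t a c hc
      have hstep : ∀ K : M2Z, MRel (matOf (a + t*c) (b - 2*t*a - t*t*c) c) K →
          MRel (matOf a b c) K := fun K h => step_shear a b c t h
      set a' := a + t * c with ha'
      set b' := b - 2 * t * a - t * t * c with hb'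
      clear_value a' b'
      have hinv' : a' * a' + b' * c = -1 := by rw [ha', hb']; ring_nf; linarith [hinv]
      rcases lt_or_ge b'.natAbs c.natAbs with hlt | hge
      · have h := IH b'.natAbs (hn ▸ hlt) (-a') (-c) (-b') (by simp) (by ring_nf; linarith [hinv'])
        rcases h with h | h
        · exact Or.inl (hstep _ (step_swap _ _ _ h))
        · exact Or.inr (hstep _ (step_swap _ _ _ h))
      · have habs : |c| ≤ |b'| := by
          rw [Int.abs_eq_natAbs, Int.abs_eq_natAbs]
          exact_mod_cast hge
        have hcpos : (1:ℤ) ≤ |c| := Int.one_le_abs (by exact_mod_cast hc)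
        have h4 : |a'| * |a'| = a' * a' := abs_mul_abs_self a'
        have h2 : |b' * c| = |b'| * |c| := abs_mul _ _
        have k3 : |b' * c| = 1 + a' * a' := by
          rw [(by linarith : b' * c = -(1 + a' * a')), abs_neg,
            abs_of_nonneg (by nlinarith [mul_self_nonneg a'])]
        have k1 : |c| * |c| ≤ |b'| * |c| := mul_le_mul_of_nonneg_right habs (abs_nonneg c)
        have k2 : (2 * |a'|) * (2 * |a'|) ≤ |c| * |c| :=
          mul_self_le_mul_self (by positivity) ht
        have ha0 : a' = 0 := by
          by_contra h0
          have h1 : (1:ℤ) ≤ |a'| := Int.one_le_abs h0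
          have k5 : (1:ℤ) ≤ a' * a' := by nlinarith
          nlinarith
        have hc1 : |c| = 1 := by
          rw [ha0] at k3
          simp at k3
          nlinarith
        rw [ha0] at hinv'
        simp at hinv'
        have hbc : b' * c = -1 := by linarith
        rcases abs_eq (by norm_num : (0:ℤ) ≤ 1) |>.mp hc1 with hc2 | hc2
        · left
          have hb1 : b' = -1 := by nlinarith
          apply hstep; rw [ha0, hb1, hc2]; exact mrel_refl _
        · right
          have hb1 : b' = 1 := by nlinarith
          apply hstep; rw [ha0, hb1, hc2]
          have : -(matOf 0 (-1) 1) = matOf 0 1 (-1) := by rw [neg_matOf]; norm_num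
          rw [this]; exact mrel_refl _

-- center characterization
lemma neg_one_mem_center : (-1 : GL2Z) ∈ Subgroup.center GL2Z := by
  rw [Subgroup.mem_center_iff]
  intro g
  simp

lemma center_eq (M : GL2Z) (h : M ∈ Subgroup.center GL2Z) : M = 1 ∨ M = -1 := by
  rw [Subgroup.mem_center_iff] at h
  set A : M2Z := (M : M2Z) with hA
  have hE := congrArg Units.val (h (shearU 1))
  have hF := congrArg Units.val (h ⟨!![1,0;1,1], !![1,0;-1,1], by decide, by decide⟩)
  simp only [Units.val_mul] at hE hF
  have hE' : !![(1:ℤ),1;0,1] * A = A * !![(1:ℤ),1;0,1] := hE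
  have hF' : !![(1:ℤ),0;1,1] * A = A * !![(1:ℤ),0;1,1] := hF
  have hc : A 1 0 = 0 := by
    have := congrFun (congrFun hE' 0) 0
    simp [Matrix.mul_apply, Fin.sum_univ_two] at this
    linarith
  have hb : A 0 1 = 0 := by
    have := congrFun (congrFun hF' 1) 1
    simp [Matrix.mul_apply, Fin.sum_univ_two] at this
    linarith
  have hd : A 1 1 = A 0 0 := by
    have := congrFun (congrFun hE' 0) 1
    simp [Matrix.mul_apply, Fin.sum_univ_two] at this
    linarith
  -- A is scalar
  have hAeq : A = !![A 0 0, 0; 0, A 0 0] := by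
    ext i j
    fin_cases i <;> fin_cases j <;> simp [hb, hc, hd]
  -- determinant is a unit
  have hdet : (A 0 0) * (A 0 0) * ((M⁻¹ : GL2Z) : M2Z).det = 1 := by
    have hmul : (M : M2Z) * ((M⁻¹ : GL2Z) : M2Z) = 1 := by
      rw [← Units.val_mul]
      simp
    have h1 : A.det * ((M⁻¹ : GL2Z) : M2Z).det = 1 := by
      rw [← Matrix.det_mul, hA, hmul, Matrix.det_one]
    rw [hAeq, Matrix.det_fin_two_of] at h1
    rw [← h1]; ring
  have hu : IsUnit (A 0 0 * A 0 0) := IsUnit.of_mul_eq_one _ hdet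
  have h1 : A 0 0 * A 0 0 = 1 := by
    rcases Int.isUnit_iff.mp hu with h | h
    · exact h
    · exfalso; nlinarith [mul_self_nonneg (A 0 0)]
  rcases mul_self_eq_one_iff.mp h1 with h | h
  · left
    apply Units.ext
    show (M : M2Z) = ((1 : GL2Z) : M2Z)
    rw [← hA, hAeq, h]
    simp [Matrix.one_fin_two]
  · right
    apply Units.ext
    show (M : M2Z) = ((-1 : GL2Z) : M2Z)
    rw [← hA, hAeq, h, Units.val_neg]
    simp [Matrix.one_fin_two]

lemma mrel_toConj (M Ku : GL2Z)
    (h : MRel (M : M2Z) (Ku : M2Z) ∨ MRel (M : M2Z) (-(Ku : M2Z))) :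
    IsConj (cls M) (cls Ku) := by
  have key : ∀ (L : GL2Z), MRel (M : M2Z) (L : M2Z) → IsConj (cls M) (cls L) := by
    intro L ⟨P, hP⟩
    have hP' : P * M = L * P := Units.ext (by push_cast [Units.val_mul]; exact hP)
    rw [isConj_iff]
    refine ⟨cls P, ?_⟩
    show (QuotientGroup.mk P) * (QuotientGroup.mk M) * (QuotientGroup.mk P)⁻¹ = _
    rw [← QuotientGroup.mk_inv, ← QuotientGroup.mk_mul, ← QuotientGroup.mk_mul]
    congr 1
    rw [hP', mul_assoc, mul_inv_cancel, mul_one]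
  rcases h with h | h
  · exact key Ku h
  · have h2 : MRel (M : M2Z) ((-Ku : GL2Z) : M2Z) := by rwa [Units.val_neg]
    have := key (-Ku) h2
    have hcls : cls (-Ku) = cls Ku := by
      have h9 : (-Ku) = (-1 : GL2Z) * Ku := by rw [neg_one_mul]
      show QuotientGroup.mk (-Ku) = QuotientGroup.mk Ku
      rw [h9, QuotientGroup.mk_mul,
        (QuotientGroup.eq_one_iff _).mpr neg_one_mem_center, one_mul]
    rwa [hcls] at this
  
lemma sq_entries (a b c d e : ℤ) (h : !![a,b;c,d] * !![a,b;c,d] = e • (1 : M2Z)) :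
    a*a + b*c = e ∧ b*(a+d) = 0 ∧ c*(a+d) = 0 ∧ d*d + b*c = e := by
  have h00 := congrFun (congrFun h 0) 0
  have h01 := congrFun (congrFun h 0) 1
  have h10 := congrFun (congrFun h 1) 0
  have h11 := congrFun (congrFun h 1) 1
  simp [Matrix.mul_apply, Fin.sum_univ_two, Matrix.one_apply] at h00 h01 h10 h11
  refine ⟨?_, ?_, ?_, ?_⟩
  · linear_combination h00
  · linear_combination h01
  · linear_combination h10
  · linear_combination h11

/-- Every element of order 2 in PGL(2,ℤ) is conjugate to [S], [N], or [T]. -/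
theorem stmt_5 (p : PGL2Z) (hp : orderOf p = 2) :
    IsConj p (cls Smat) ∨ IsConj p (cls Nmat) ∨ IsConj p (cls Tmat) := by
  obtain ⟨M, rfl⟩ := QuotientGroup.mk_surjective p
  have hne : M ∉ Subgroup.center GL2Z := by
    intro h
    have h1 : (QuotientGroup.mk M : PGL2Z) = 1 := (QuotientGroup.eq_one_iff _).mpr h
    rw [h1] at hp
    simp at hp
  have hsq : M ^ 2 ∈ Subgroup.center GL2Z := by
    have h1 := pow_orderOf_eq_one (QuotientGroup.mk M : PGL2Z)
    rw [hp, ← QuotientGroup.mk_pow] at h1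
    exact (QuotientGroup.eq_one_iff _).mp h1
  obtain ⟨a, b, c, d, hA4⟩ : ∃ a b c d, (M : M2Z) = !![a,b;c,d] :=
    ⟨_, _, _, _, by ext i j; fin_cases i <;> fin_cases j <;> rfl⟩
  rcases center_eq _ hsq with h2 | h2
  · -- M² = 1 : conjugate to S or N
    have hmm : !![a,b;c,d] * !![a,b;c,d] = (1:ℤ) • (1 : M2Z) := by
      have h3 := congrArg Units.val h2
      rw [Units.val_pow_eq_pow_val, pow_two, hA4] at h3
      rw [h3, one_smul]
      rfl
    obtain ⟨e1, e2, e3, e4⟩ := sq_entries a b c d 1 hmm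
    have hda : d = -a := by
      by_contra hd
      have had : a + d ≠ 0 := fun h => hd (by linarith)
      have hb0 : b = 0 := by
        rcases mul_eq_zero.mp e2 with h | h
        · exact h
        · exact absurd h had
      have hc0 : c = 0 := by
        rcases mul_eq_zero.mp e3 with h | h
        · exact h
        · exact absurd h had
      rw [hb0, hc0] at e1 e4
      simp at e1 e4
      have haa : a = d := by
        rcases mul_self_eq_one_iff.mp e1 with h | h <;>
        rcases mul_self_eq_one_iff.mp e4 with h' | h' <;> omega
      apply hne
      rcases mul_self_eq_one_iff.mp e1 with ha1 | ha1
      · have hM1 : M = 1 := by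
          apply Units.ext
          show (M : M2Z) = ((1 : GL2Z) : M2Z)
          rw [hA4, hb0, hc0, ← haa, ha1]
          show _ = (1 : M2Z)
          rw [Matrix.one_fin_two]
        rw [hM1]; exact Subgroup.one_mem _
      · have hM1 : M = -1 := by
          apply Units.ext
          show (M : M2Z) = ((-1 : GL2Z) : M2Z)
          rw [hA4, hb0, hc0, ← haa, ha1, Units.val_neg]
          show _ = -(1 : M2Z)
          rw [Matrix.one_fin_two]
          norm_num
        rw [hM1]; exact neg_one_mem_center
    have hAmat : (M : M2Z) = matOf a b c := by
      rw [hA4, hda]; rfl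
    have hred := redSN c.natAbs a b c rfl e1
    rw [← hAmat] at hred
    have hSmat : ((Smat : GL2Z) : M2Z) = matOf 0 1 1 := by
      show !![(0:ℤ),1;1,0] = _
      norm_num [matOf]
    have hNmat : ((Nmat : GL2Z) : M2Z) = matOf (-1) 0 0 := by
      show !![(-1:ℤ),0;0,1] = _
      norm_num [matOf]
    rcases hred with h | h | h | h
    · left; exact mrel_toConj M Smat (Or.inl (hSmat ▸ h))
    · left; exact mrel_toConj M Smat (Or.inr (by rw [hSmat]; exact h))
    · right; left; exact mrel_toConj M Nmat (Or.inl (hNmat ▸ h))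
    · right; left; exact mrel_toConj M Nmat (Or.inr (by rw [hNmat]; exact h))
  · -- M² = -1 : conjugate to T
    have hmm : !![a,b;c,d] * !![a,b;c,d] = (-1:ℤ) • (1 : M2Z) := by
      have h3 := congrArg Units.val h2
      rw [Units.val_pow_eq_pow_val, pow_two, hA4, Units.val_neg] at h3
      rw [h3, neg_smul, one_smul, Units.val_one]
    obtain ⟨e1, e2, e3, e4⟩ := sq_entries a b c d (-1) hmm
    have hda : d = -a := by
      by_contra hd
      have had : a + d ≠ 0 := fun h => hd (by linarith)
      have hb0 : b = 0 := by
        rcases mul_eq_zero.mp e2 with h | h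
        · exact h
        · exact absurd h had
      rw [hb0] at e1
      simp at e1
      nlinarith [mul_self_nonneg a]
    have hAmat : (M : M2Z) = matOf a b c := by
      rw [hA4, hda]; rfl
    have hred := redT c.natAbs a b c rfl e1
    rw [← hAmat] at hred
    have hTmat : ((Tmat : GL2Z) : M2Z) = matOf 0 (-1) 1 := by
      show !![(0:ℤ),-1;1,0] = _
      norm_num [matOf]
    right; right
    rcases hred with h | h
    · exact mrel_toConj M Tmat (Or.inl (hTmat ▸ h))
    · exact mrel_toConj M Tmat (Or.inr (by rw [hTmat]; exact h))
end
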